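/- Every selection convex cooperative interval game on a finite player set N is strongly balanced, i.e. every selection of it has a nonempty core. -/

import Mathlib

open Finset

variable {N : Type*} [Fintype N] [DecidableEq N]

/-- A cooperative interval game, given by its lower and upper border games. -/
def IsIntervalGame (wl wu : Finset N → ℝ) : Prop :=
  (∀ S, wl S ≤ wu S) ∧ wl ∅ = 0 ∧ wu ∅ = 0

/-- A selection of the interval game `(wl, wu)`. -/
def IsSelection (wl wu v : Finset N → ℝ) : Prop :=
  v ∅ = 0 ∧ ∀ S, wl S ≤ v S ∧ v S ≤ wu S

/-- Convexity (supermodularity) of a cooperative game. -/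
def IsConvexGame (v : Finset N → ℝ) : Prop :=
  ∀ S T, v S + v T ≤ v (S ∪ T) + v (S ∩ T)

/-- Membership of a payoff vector in the core of a cooperative game. -/
def InCore (v : Finset N → ℝ) (x : N → ℝ) : Prop :=
  (∑ i, x i) = v Finset.univ ∧ ∀ S : Finset N, v S ≤ ∑ i ∈ S, x i

/-- The selection core of an interval game. -/
def selectionCore (wl wu : Finset N → ℝ) : Set (N → ℝ) :=
  {x | ∃ v, IsSelection wl wu v ∧ InCore v x}

/-- `gen` of the interval core of an interval game: all real payoff vectors generated by
some element `(X i)_{i}` (given by lower bounds `Xl` and upper bounds `Xu`) of the interval core. -/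
def genIntervalCore (wl wu : Finset N → ℝ) : Set (N → ℝ) :=
  {x | ∃ Xl Xu : N → ℝ, (∀ i, Xl i ≤ Xu i) ∧
    (∑ i, Xl i) = wl Finset.univ ∧ (∑ i, Xu i) = wu Finset.univ ∧
    (∀ S : Finset N, S.Nonempty → wl S ≤ ∑ i ∈ S, Xl i ∧ wu S ≤ ∑ i ∈ S, Xu i) ∧
    ∀ i, Xl i ≤ x i ∧ x i ≤ Xu i}

/-- The Shapley coefficient `|S|! (n - |S| - 1)! / n!`. -/
noncomputable def shapleyCoeff (n k : ℕ) : ℝ :=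
  (Nat.factorial k * Nat.factorial (n - k - 1) : ℝ) / (Nat.factorial n : ℝ)

/-- The Shapley value of a cooperative game. -/
noncomputable def shapley (v : Finset N → ℝ) (i : N) : ℝ :=
  ∑ S ∈ (Finset.univ.erase i).powerset,
    shapleyCoeff (Fintype.card N) S.card * (v (insert i S) - v S)

/-- Lower endpoint of the interval Shapley value extension `Φ*`. -/
noncomputable def phiLow (wl wu : Finset N → ℝ) (i : N) : ℝ :=
  ∑ S ∈ (Finset.univ.erase i).powerset,
    shapleyCoeff (Fintype.card N) S.card * (wl (insert i S) - wu S)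

/-- Upper endpoint of the interval Shapley value extension `Φ*`. -/
noncomputable def phiHigh (wl wu : Finset N → ℝ) (i : N) : ℝ :=
  ∑ S ∈ (Finset.univ.erase i).powerset,
    shapleyCoeff (Fintype.card N) S.card * (wu (insert i S) - wl S)

theorem selection_convex_strongly_balanced (wl wu : Finset N → ℝ)
    (hw : IsIntervalGame wl wu)
    (hconv : ∀ v, IsSelection wl wu v → IsConvexGame v) :
    ∀ v, IsSelection wl wu v → ∃ x : N → ℝ, InCore v x := by
  intro v hv
  have hc : IsConvexGame v := hconv v hv
  have hv0 : v ∅ = 0 := hv.1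
  set n := Fintype.card N with hn
  set e := Fintype.equivFin N with he
  set f : ℕ → Finset N := fun k => univ.filter (fun i => (e i : ℕ) < k) with hf
  have hfn : f n = Finset.univ := by
    ext i; simp [hf, (e i).is_lt]; exact (e i).is_lt
  have hf0 : f 0 = ∅ := by
    ext i; simp [hf]
  -- key: if e j = k then f (k+1) = insert j (f k)
  have hins : ∀ (j : N) (k : ℕ), (e j : ℕ) = k → f (k + 1) = insert j (f k) := by
    intro j k hjk
    ext i
    simp only [hf, mem_filter, mem_univ, true_and, mem_insert]
    constructor
    · intro h
      rcases Nat.lt_succ_iff_lt_or_eq.mp h with h' | h'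
      · exact Or.inr h'
      · left
        have : e i = e j := Fin.ext (by omega)
        exact e.injective this
    · rintro (rfl | h)
      · omega
      · omega
  refine ⟨fun i => v (f ((e i : ℕ) + 1)) - v (f (e i : ℕ)), ?_, ?_⟩
  · have : (∑ i, (v (f ((e i : ℕ) + 1)) - v (f (e i : ℕ))))
        = ∑ k ∈ Finset.range n, (v (f (k + 1)) - v (f k)) := by
      rw [← Fin.sum_univ_eq_sum_range (fun k => v (f (k + 1)) - v (f k)) n]
      exact Fintype.sum_equiv e _ _ (fun i => rfl)
    rw [this, Finset.sum_range_sub (fun k => v (f k)), hfn, hf0, hv0, sub_zero]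
  · intro S
    have key : ∀ k, v (S ∩ f k) ≤ ∑ i ∈ S ∩ f k, (v (f ((e i : ℕ) + 1)) - v (f (e i : ℕ))) := by
      intro k
      induction k with
      | zero => simp [hf0, hv0]
      | succ k ih =>
        by_cases hj : ∃ j ∈ S, (e j : ℕ) = k
        · obtain ⟨j, hjS, hjk⟩ := hj
          have hins' := hins j k hjk
          have hjf : j ∉ f k := by simp [hf, hjk]
          have hS1 : S ∩ f (k + 1) = insert j (S ∩ f k) := by
            rw [hins', Finset.inter_insert_of_mem hjS]
          have hjnot : j ∉ S ∩ f k := fun h => hjf (Finset.mem_inter.mp h).2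
          rw [hS1, Finset.sum_insert hjnot]
          have conv := hc (insert j (S ∩ f k)) (f k)
          have hu : insert j (S ∩ f k) ∪ f k = f (k + 1) := by
            rw [hins']
            ext i
            simp only [mem_union, mem_insert, mem_inter]
            tauto
          have hi : insert j (S ∩ f k) ∩ f k = S ∩ f k := by
            ext i
            simp only [mem_inter, mem_insert]
            constructor
            · rintro ⟨rfl | ⟨h1, h2⟩, h3⟩
              · exact absurd h3 hjf
              · exact ⟨h1, h3⟩
            · exact fun ⟨h1, h2⟩ => ⟨Or.inr ⟨h1, h2⟩, h2⟩
          rw [hu, hi] at conv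
          rw [hjk]
          linarith
        · have : S ∩ f (k + 1) = S ∩ f k := by
            ext i
            simp only [mem_inter, hf, mem_filter, mem_univ, true_and]
            constructor
            · rintro ⟨h1, h2⟩
              refine ⟨h1, ?_⟩
              rcases Nat.lt_succ_iff_lt_or_eq.mp h2 with h' | h'
              · exact h'
              · exact absurd ⟨i, h1, h'⟩ hj
            · exact fun ⟨h1, h2⟩ => ⟨h1, Nat.lt_succ_of_lt h2⟩
          rw [this]; exact ih
    have hSn : S ∩ f n = S := by
      rw [hfn, Finset.inter_univ]
    have := key n
    rwa [hSn] at this
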